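/- Under Haar measure on the orthogonal group O(N) (N > 1), the average of the product of two matrix entries is E[O_{ip} O_{jq}] = δ_{ij} δ_{pq} / N. -/

import Mathlib

open MeasureTheory Matrix

namespace Stmt18Aux

variable {N : ℕ}

local notation "G" => Matrix.orthogonalGroup (Fin N) ℝ
local notation "M" => Matrix (Fin N) (Fin N) ℝ

lemma continuous_entry (a b : Fin N) :
    Continuous fun O : G => (O : M) a b :=
  continuous_subtype_val.matrix_elem a b

instance : IsTopologicalGroup G where
  continuous_mul := by
    apply continuous_induced_rng.mpr
    exact (continuous_subtype_val.comp continuous_fst).matrix_mul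
      (continuous_subtype_val.comp continuous_snd)
  continuous_inv := by
    apply continuous_induced_rng.mpr
    show Continuous fun U : G => star (U : M)
    exact continuous_subtype_val.matrix_conjTranspose

lemma isCompact_carrier :
    IsCompact (Matrix.unitaryGroup (Fin N) ℝ : Set M) := by
  have hcube : IsCompact (Set.pi Set.univ fun _ : Fin N =>
      Set.pi Set.univ fun _ : Fin N => Set.Icc (-1 : ℝ) 1) :=
    isCompact_univ_pi fun _ => isCompact_univ_pi fun _ => isCompact_Icc
  apply hcube.of_isClosed_subset
  · have : (Matrix.unitaryGroup (Fin N) ℝ : Set M)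
        = {A : M | star A * A = 1} ∩ {A : M | A * star A = 1} := by
      ext A
      simp only [SetLike.mem_coe, Unitary.mem_iff, Set.mem_inter_iff, Set.mem_setOf_eq]
    rw [this]
    have hstar : Continuous fun A : M => star A := continuous_id.matrix_conjTranspose
    exact (isClosed_eq (hstar.matrix_mul continuous_id) continuous_const).inter
      (isClosed_eq (continuous_id.matrix_mul hstar) continuous_const)
  · intro A hA
    have hA' : A ∈ Matrix.unitaryGroup (Fin N) ℝ := hA
    intro a _
    intro b _
    have := entry_norm_bound_of_unitary hA' a b
    rw [Real.norm_eq_abs] at this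
    exact Set.mem_Icc.mpr (abs_le.mp this)

instance : CompactSpace G :=
  isCompact_iff_compactSpace.mp isCompact_carrier

/-- sign-flip matrix at index `k` as an element of the orthogonal group -/
def signFlip (k : Fin N) : G :=
  ⟨Matrix.diagonal (fun m => if m = k then (-1 : ℝ) else 1), by
    have h : Matrix.diagonal (fun m => if m = k then (-1 : ℝ) else 1) *
        Matrix.diagonal (fun m => if m = k then (-1 : ℝ) else 1) = 1 := by
      rw [Matrix.diagonal_mul_diagonal]
      rw [show (fun m => (if m = k then (-1 : ℝ) else 1) * (if m = k then (-1 : ℝ) else 1))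
          = fun _ => (1 : ℝ) from funext fun m => by split <;> norm_num]
      exact Matrix.diagonal_one
    have hs : star (Matrix.diagonal (fun m => if m = k then (-1 : ℝ) else 1))
        = Matrix.diagonal (fun m => if m = k then (-1 : ℝ) else 1) := by
      rw [Matrix.star_eq_conjTranspose, Matrix.diagonal_conjTranspose]
      simp
    exact Unitary.mem_iff.mpr ⟨by rw [hs]; exact h, by rw [hs]; exact h⟩⟩

/-- permutation matrix of `σ` as an element of the orthogonal group -/
def permMat (σ : Equiv.Perm (Fin N)) : G :=
  ⟨Matrix.of fun a b => if σ b = a then (1 : ℝ) else 0, by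
    rw [Matrix.mem_unitaryGroup_iff']
    ext a b
    rw [Matrix.mul_apply]
    simp only [Matrix.star_eq_conjTranspose, Matrix.conjTranspose_apply, Matrix.of_apply,
      star_trivial, ite_mul, one_mul, zero_mul, Finset.sum_ite_eq, Finset.mem_univ, if_true]
    by_cases h : a = b
    · subst h; simp [Matrix.one_apply_eq]
    · rw [if_neg (fun hc => h (σ.injective hc.symm)), Matrix.one_apply_ne h]⟩

lemma coe_mul (A B : G) : ((A * B : G) : M) = (A : M) * (B : M) := rfl

lemma signFlip_mul_apply (k : Fin N) (O : G) (a b : Fin N) :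
    ((signFlip k * O : G) : M) a b = (if a = k then (-1 : ℝ) else 1) * (O : M) a b := by
  rw [coe_mul]
  exact Matrix.diagonal_mul _ _ _ _

lemma mul_signFlip_apply (k : Fin N) (O : G) (a b : Fin N) :
    ((O * signFlip k : G) : M) a b = (O : M) a b * (if b = k then (-1 : ℝ) else 1) := by
  rw [coe_mul]
  exact Matrix.mul_diagonal _ _ _ _

lemma mul_permMat_apply (σ : Equiv.Perm (Fin N)) (O : G) (a b : Fin N) :
    ((O * permMat σ : G) : M) a b = (O : M) a (σ b) := by
  rw [coe_mul]
  show ∑ k, (O : M) a k * (if σ b = k then (1:ℝ) else 0) = _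
  simp [mul_ite]

lemma row_sq_sum (O : G) (a : Fin N) :
    ∑ b, (O : M) a b * (O : M) a b = 1 := by
  have h := Unitary.coe_mul_star_self O
  have h2 := congrFun (congrFun h a) a
  rw [Matrix.mul_apply] at h2
  simp only [Unitary.coe_star, Matrix.star_eq_conjTranspose, Matrix.conjTranspose_apply,
    star_trivial, Matrix.one_apply_eq] at h2
  exact h2

end Stmt18Aux

open Stmt18Aux

/-- under normalized Haar measure on O(N), N > 1,
E[O_{ip} O_{jq}] = δ_{ij} δ_{pq} / N. -/
theorem stmt_18
    (N : ℕ) (hN : 1 < N)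
    [MeasurableSpace (Matrix.orthogonalGroup (Fin N) ℝ)]
    [BorelSpace (Matrix.orthogonalGroup (Fin N) ℝ)]
    (μ : Measure (Matrix.orthogonalGroup (Fin N) ℝ))
    [μ.IsHaarMeasure] [IsProbabilityMeasure μ]
    (i j p q : Fin N) :
    ∫ O : Matrix.orthogonalGroup (Fin N) ℝ,
        ((O : Matrix (Fin N) (Fin N) ℝ) i p * (O : Matrix (Fin N) (Fin N) ℝ) j q) ∂μ =
      (if i = j then 1 else 0) * (if p = q then 1 else 0) / N := by
  -- right invariance of the Haar probability measure on a compact group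
  haveI hri : μ.IsMulRightInvariant := by
    constructor
    intro g
    haveI : IsProbabilityMeasure (μ.map (· * g)) :=
      Measure.isProbabilityMeasure_map (continuous_mul_right g).measurable.aemeasurable
    exact Measure.isHaarMeasure_eq_of_isProbabilityMeasure (μ.map (· * g)) μ
  -- integrability of products of entries
  have integ : ∀ a b c d : Fin N,
      Integrable (fun O : Matrix.orthogonalGroup (Fin N) ℝ => (O : Matrix (Fin N) (Fin N) ℝ) a b *
        (O : Matrix (Fin N) (Fin N) ℝ) c d) μ := fun a b c d =>
    ((continuous_entry a b).mul (continuous_entry c d)).integrable_of_hasCompactSupport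
      (HasCompactSupport.of_compactSpace _)
  by_cases hij : i = j
  · subst hij
    by_cases hpq : p = q
    · subst hpq
      rw [if_pos rfl, if_pos rfl]
      -- all diagonal second moments are equal
      have hconst : ∀ r : Fin N,
          ∫ O : Matrix.orthogonalGroup (Fin N) ℝ, (O : Matrix (Fin N) (Fin N) ℝ) i r *
            (O : Matrix (Fin N) (Fin N) ℝ) i r ∂μ =
          ∫ O : Matrix.orthogonalGroup (Fin N) ℝ, (O : Matrix (Fin N) (Fin N) ℝ) i p *
            (O : Matrix (Fin N) (Fin N) ℝ) i p ∂μ := by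
        intro r
        have h := integral_mul_right_eq_self (μ := μ)
          (fun O : Matrix.orthogonalGroup (Fin N) ℝ => (O : Matrix (Fin N) (Fin N) ℝ) i r *
            (O : Matrix (Fin N) (Fin N) ℝ) i r) (permMat (Equiv.swap p r))
        rw [← h]
        congr 1
        funext O
        rw [mul_permMat_apply, Equiv.swap_apply_right]
      have hsum : ∑ r : Fin N, ∫ O : Matrix.orthogonalGroup (Fin N) ℝ, (O : Matrix (Fin N) (Fin N) ℝ) i r *
          (O : Matrix (Fin N) (Fin N) ℝ) i r ∂μ = 1 := by
        rw [← integral_finset_sum _ fun r _ => integ i r i r]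
        have : (fun O : Matrix.orthogonalGroup (Fin N) ℝ => ∑ r : Fin N, (O : Matrix (Fin N) (Fin N) ℝ) i r *
            (O : Matrix (Fin N) (Fin N) ℝ) i r) = fun _ => (1 : ℝ) :=
          funext fun O => row_sq_sum O i
        rw [this, integral_const, probReal_univ]
        simp
      rw [Finset.sum_congr rfl (fun r _ => hconst r), Finset.sum_const,
        Finset.card_univ, Fintype.card_fin, nsmul_eq_mul] at hsum
      have hN0 : (N : ℝ) ≠ 0 := Nat.cast_ne_zero.mpr (by omega)
      field_simp
      simp only [sq]
      linarith [hsum]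
    · rw [if_neg hpq]
      -- flip sign of column p
      have h := integral_mul_right_eq_self (μ := μ)
        (fun O : Matrix.orthogonalGroup (Fin N) ℝ => (O : Matrix (Fin N) (Fin N) ℝ) i p *
          (O : Matrix (Fin N) (Fin N) ℝ) i q) (signFlip p)
      have h2 : (fun O : Matrix.orthogonalGroup (Fin N) ℝ => ((O * signFlip p : Matrix.orthogonalGroup (Fin N) ℝ) : Matrix (Fin N) (Fin N) ℝ) i p *
          ((O * signFlip p : Matrix.orthogonalGroup (Fin N) ℝ) : Matrix (Fin N) (Fin N) ℝ) i q)
          = fun O : Matrix.orthogonalGroup (Fin N) ℝ => -((O : Matrix (Fin N) (Fin N) ℝ) i p *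
            (O : Matrix (Fin N) (Fin N) ℝ) i q) := by
        funext O
        rw [mul_signFlip_apply, mul_signFlip_apply, if_pos rfl,
          if_neg (fun hc => hpq hc.symm)]
        ring
      rw [h2, integral_neg] at h
      simp only [mul_zero, zero_div]
      linarith [h]
  · rw [if_neg hij]
    -- flip sign of row i
    have h := integral_mul_left_eq_self (μ := μ)
      (fun O : Matrix.orthogonalGroup (Fin N) ℝ => (O : Matrix (Fin N) (Fin N) ℝ) i p *
        (O : Matrix (Fin N) (Fin N) ℝ) j q) (signFlip i)
    have h2 : (fun O : Matrix.orthogonalGroup (Fin N) ℝ => ((signFlip i * O : Matrix.orthogonalGroup (Fin N) ℝ) : Matrix (Fin N) (Fin N) ℝ) i p *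
        ((signFlip i * O : Matrix.orthogonalGroup (Fin N) ℝ) : Matrix (Fin N) (Fin N) ℝ) j q)
        = fun O : Matrix.orthogonalGroup (Fin N) ℝ => -((O : Matrix (Fin N) (Fin N) ℝ) i p *
          (O : Matrix (Fin N) (Fin N) ℝ) j q) := by
      funext O
      rw [signFlip_mul_apply, signFlip_mul_apply, if_pos rfl,
        if_neg (fun hc => hij hc.symm)]
      ring
    rw [h2, integral_neg] at h
    simp only [zero_mul, zero_div]
    linarith [h]
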